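/- In the setting of the previous statement, if in addition F : D → D' is fully faithful, then the induced functor F̄ : D/N → D'/N' is fully faithful. -/

import Mathlib

open CategoryTheory Limits Pretriangulated Triangulated

/-- In the setting of an adjoint pair `F ⊣ G` of exact functors preserving the
subcategories `N`, `N'`, if `F` is moreover fully faithful then any functor
`F̄ : D/N → D'/N'` induced by `F` on the Verdier quotients is fully faithful. -/
theorem stmt1 {D D' : Type*} [Category D] [Category D']
    [HasZeroObject D] [HasZeroObject D'] [Preadditive D] [Preadditive D']
    [HasShift D ℤ] [HasShift D' ℤ]
    [∀ n : ℤ, (shiftFunctor D n).Additive] [∀ n : ℤ, (shiftFunctor D' n).Additive]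
    [Pretriangulated D] [Pretriangulated D'] [IsTriangulated D] [IsTriangulated D']
    (N : ObjectProperty D) [N.IsTriangulated] (N' : ObjectProperty D') [N'.IsTriangulated]
    (F : D ⥤ D') (G : D' ⥤ D) [F.CommShift ℤ] [G.CommShift ℤ]
    [F.IsTriangulated] [G.IsTriangulated] (adj : F ⊣ G)
    (hF : ∀ X : D, N X → N' (F.obj X))
    (hG : ∀ Y : D', N' Y → N (G.obj Y))
    [F.Full] [F.Faithful]
    (Fbar : N.trW.Localization ⥤ N'.trW.Localization)
    (eF : N.trW.Q ⋙ Fbar ≅ F ⋙ N'.trW.Q) :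
    Fbar.Full ∧ Fbar.Faithful := by
  -- G sends N'.trW to N.trW, hence G ⋙ N.trW.Q inverts N'.trW
  have hGW : N'.trW.IsInvertedBy (G ⋙ N.trW.Q) := by
    rintro X Y f ⟨Z, g, h, hT, hZ⟩
    exact Localization.inverts N.trW.Q N.trW _
      (ObjectProperty.trW.mk N (G.map_distinguished _ hT) (hG _ hZ))
  -- the induced functor Ḡ on localizations
  let Gbar : N'.trW.Localization ⥤ N.trW.Localization :=
    Localization.lift (G ⋙ N.trW.Q) hGW N'.trW.Q
  have facG : N'.trW.Q ⋙ Gbar ≅ G ⋙ N.trW.Q := Localization.fac (G ⋙ N.trW.Q) hGW N'.trW.Q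
  letI : CatCommSq F N.trW.Q N'.trW.Q Fbar := ⟨eF.symm⟩
  letI : CatCommSq G N'.trW.Q N.trW.Q Gbar := ⟨facG.symm⟩
  -- the localized adjunction F̄ ⊣ Ḡ
  let adj' : Fbar ⊣ Gbar := adj.localization N.trW.Q N.trW N'.trW.Q N'.trW Fbar Gbar
  -- its unit is an isomorphism since the unit of `adj` is
  have hunit : ∀ X : D, IsIso (adj'.unit.app (N.trW.Q.obj X)) := by
    intro X
    rw [Adjunction.localization_unit_app]
    infer_instance
  have : ∀ Y : N.trW.Localization, IsIso (adj'.unit.app Y) := by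
    intro Y
    haveI := Localization.essSurj N.trW.Q N.trW
    have e := N.trW.Q.objObjPreimageIso Y
    have hnat := adj'.unit.naturality e.hom
    have : adj'.unit.app Y =
        (𝟭 _).map e.inv ≫ adj'.unit.app (N.trW.Q.obj (N.trW.Q.objPreimage Y)) ≫
          (Fbar ⋙ Gbar).map e.hom := by
      rw [← hnat]
      simp
    rw [this]
    haveI := hunit (N.trW.Q.objPreimage Y)
    infer_instance
  haveI : IsIso adj'.unit := NatIso.isIso_of_isIso_app _
  have hff := adj'.fullyFaithfulLOfIsIsoUnit
  exact ⟨hff.full, hff.faithful⟩
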